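/- Let z₁, …, zₙ ∈ ℝ with |z_i| ≤ K for all i, let β, γ ∈ ℝ^p, and let Z_i ∈ ℝ^p with ‖Z_i‖_∞ ≤ K_Z componentwise. Define weights w_i(β) := Y_i e^{β^⊤ Z_i} / ∑_ℓ Y_ℓ e^{β^⊤ Z_ℓ}, where each Y_i ∈ {0,1} and at least one Y_i e^{β^⊤Z_i} > 0 and at least one Y_i e^{γ^⊤Z_i} > 0. Then ∑_{i=1}^n |w_i(β) − w_i(γ)| ≤ 2(e^{K_Z ‖β−γ‖₁} − 1). -/

import Mathlib

open Finset

theorem sum_abs_weight_diff_le {n p : ℕ}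
    (K_Z : ℝ) (Y : Fin n → ℝ) (Z : Fin n → Fin p → ℝ) (β γ : Fin p → ℝ)
    (hY : ∀ i, Y i = 0 ∨ Y i = 1)
    (hZ : ∀ i j, |Z i j| ≤ K_Z)
    (hβ : ∃ i, 0 < Y i * Real.exp (∑ j, β j * Z i j))
    (hγ : ∃ i, 0 < Y i * Real.exp (∑ j, γ j * Z i j))
    (w : (Fin p → ℝ) → Fin n → ℝ)
    (hw : ∀ b i, w b i =
      Y i * Real.exp (∑ j, b j * Z i j) /
        ∑ l, Y l * Real.exp (∑ j, b j * Z l j)) :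
    ∑ i, |w β i - w γ i| ≤
      2 * (Real.exp (K_Z * ∑ j, |β j - γ j|) - 1) := by
  classical
  set a : Fin n → ℝ := fun i => Y i * Real.exp (∑ j, β j * Z i j) with ha_def
  set b : Fin n → ℝ := fun i => Y i * Real.exp (∑ j, γ j * Z i j) with hb_def
  set D : ℝ := K_Z * ∑ j, |β j - γ j| with hD_def
  have hYnn : ∀ i, 0 ≤ Y i := fun i => by rcases hY i with h | h <;> simp [h]
  have hann : ∀ i, 0 ≤ a i := fun i => mul_nonneg (hYnn i) (Real.exp_pos _).le
  have hbnn : ∀ i, 0 ≤ b i := fun i => mul_nonneg (hYnn i) (Real.exp_pos _).le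
  set A : ℝ := ∑ i, a i with hA_def
  set B : ℝ := ∑ i, b i with hB_def
  have hA : 0 < A :=
    Finset.sum_pos' (fun i _ => hann i)
      (by obtain ⟨i, hi⟩ := hβ; exact ⟨i, Finset.mem_univ i, hi⟩)
  have hB : 0 < B :=
    Finset.sum_pos' (fun i _ => hbnn i)
      (by obtain ⟨i, hi⟩ := hγ; exact ⟨i, Finset.mem_univ i, hi⟩)
  have hdot : ∀ i, |(∑ j, β j * Z i j) - ∑ j, γ j * Z i j| ≤ D := by
    intro i
    rw [← Finset.sum_sub_distrib]
    calc |∑ j, (β j * Z i j - γ j * Z i j)|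
        ≤ ∑ j, |β j * Z i j - γ j * Z i j| := Finset.abs_sum_le_sum_abs _ _
      _ ≤ ∑ j, |β j - γ j| * K_Z := by
          refine Finset.sum_le_sum fun j _ => ?_
          rw [← sub_mul, abs_mul]
          exact mul_le_mul_of_nonneg_left (hZ i j) (abs_nonneg _)
      _ = D := by rw [hD_def, ← Finset.sum_mul, mul_comm]
  have hED : 1 ≤ Real.exp D := by
    obtain ⟨i0, _⟩ := hβ
    have h0 : (0:ℝ) ≤ D := le_trans (abs_nonneg _) (hdot i0)
    simpa using Real.exp_le_exp.2 h0
  have h1 : ∀ i, a i ≤ b i * Real.exp D := by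
    intro i
    have hle : (∑ j, β j * Z i j) ≤ (∑ j, γ j * Z i j) + D := by
      have := (abs_le.1 (hdot i)).2; linarith
    calc a i = Y i * Real.exp (∑ j, β j * Z i j) := rfl
      _ ≤ Y i * Real.exp ((∑ j, γ j * Z i j) + D) :=
          mul_le_mul_of_nonneg_left (Real.exp_le_exp.2 hle) (hYnn i)
      _ = b i * Real.exp D := by rw [Real.exp_add, hb_def]; ring
  have h2 : ∀ i, b i ≤ a i * Real.exp D := by
    intro i
    have hle : (∑ j, γ j * Z i j) ≤ (∑ j, β j * Z i j) + D := by
      have := (abs_le.1 (hdot i)).1; linarith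
    calc b i = Y i * Real.exp (∑ j, γ j * Z i j) := rfl
      _ ≤ Y i * Real.exp ((∑ j, β j * Z i j) + D) :=
          mul_le_mul_of_nonneg_left (Real.exp_le_exp.2 hle) (hYnn i)
      _ = a i * Real.exp D := by rw [Real.exp_add, ha_def]; ring
  have habs : ∀ i, |a i - b i| ≤ (Real.exp D - 1) * a i := by
    intro i
    rw [abs_sub_le_iff]
    constructor
    · nlinarith [h1 i, Real.exp_pos D, hann i, hbnn i,
        mul_nonneg (hann i) (sq_nonneg (Real.exp D - 1))]
    · nlinarith [h2 i]
  set S : ℝ := ∑ i, |a i - b i| with hS_def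
  have hS : S ≤ (Real.exp D - 1) * A := by
    rw [hS_def, hA_def, Finset.mul_sum]
    exact Finset.sum_le_sum fun i _ => habs i
  have hBA : |B - A| ≤ S := by
    rw [hB_def, hA_def, ← Finset.sum_sub_distrib]
    refine le_trans (Finset.abs_sum_le_sum_abs _ _) ?_
    rw [hS_def]
    exact Finset.sum_le_sum fun i _ => by rw [abs_sub_comm]
  have hpoint : ∀ i, |w β i - w γ i| ≤
      |a i - b i| / A + b i * |B - A| / (A * B) := by
    intro i
    have hwβ : w β i = a i / A := hw β i
    have hwγ : w γ i = b i / B := hw γ i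
    have hid : a i / A - b i / B = (a i - b i) / A + b i * (B - A) / (A * B) := by
      field_simp
      ring
    rw [hwβ, hwγ, hid]
    refine le_trans (abs_add_le _ _) ?_
    rw [abs_div, abs_div, abs_mul (b i), abs_of_pos hA,
      abs_of_nonneg (hbnn i), abs_of_pos (mul_pos hA hB)]
  have hsum : ∑ i, |w β i - w γ i| ≤ S / A + B * |B - A| / (A * B) := by
    calc ∑ i, |w β i - w γ i|
        ≤ ∑ i, (|a i - b i| / A + b i * |B - A| / (A * B)) :=
          Finset.sum_le_sum fun i _ => hpoint i
      _ = S / A + B * |B - A| / (A * B) := by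
          rw [Finset.sum_add_distrib, ← Finset.sum_div, ← hS_def]
          congr 1
          rw [← Finset.sum_div, ← Finset.sum_mul, ← hB_def]
  have hBterm : B * |B - A| / (A * B) = |B - A| / A := by
    field_simp
  rw [hBterm] at hsum
  have hfin : S / A + |B - A| / A ≤ 2 * (Real.exp D - 1) := by
    rw [← add_div, div_le_iff₀ hA]
    nlinarith [hS, hBA]
  exact le_trans hsum hfin
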